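/- Let Φ be a k-x-basic read-once Boolean formula, σ an assignment, and v a vertex with κ_v ≡ ∨ (disjunction) such that σ is ε-far from the set of assignments making Φ_v evaluate to 1. Then: (1) every child u of v satisfies |Φ_u| ≥ ε|Φ_v|; (2) every child u satisfies that σ is ε/(1−ε)-far from making Φ_u evaluate to 1 (in relative terms of Φ_u); (3) ε ≤ 1/2; and (4) for every child u other than the heaviest child, σ is 2ε-far from making Φ_u evaluate to 1. -/

import Mathlib

/-- Read-once formula trees over variable set `X`: leaves are variables (possibly
negated), internal nodes are `∧`/`∨` gates of unbounded arity or general Boolean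
gates given by a function on the list of children values. -/
inductive Fla (X : Type) where
  | leaf : X → Fla X
  | neg : X → Fla X
  | and : List (Fla X) → Fla X
  | or : List (Fla X) → Fla X
  | gate : (List Bool → Bool) → List (Fla X) → Fla X

namespace Fla
variable {X : Type}

/-- Evaluation of a formula under an assignment. -/
def eval (σ : X → Bool) : Fla X → Bool
  | leaf x => σ x
  | neg x => !σ x
  | and l => l.attach.all (fun ⟨φ, _⟩ => eval σ φ)
  | or l => l.attach.any (fun ⟨φ, _⟩ => eval σ φ)
  | gate f l => f (l.attach.map (fun ⟨φ, _⟩ => eval σ φ))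

/-- The list of variables occurring in a formula (with multiplicity). -/
def vars : Fla X → List X
  | leaf x => [x]
  | neg x => [x]
  | and l => l.attach.flatMap (fun ⟨φ, _⟩ => vars φ)
  | or l => l.attach.flatMap (fun ⟨φ, _⟩ => vars φ)
  | gate _ l => l.attach.flatMap (fun ⟨φ, _⟩ => vars φ)

/-- The size `|Φ|` of a formula: the number of (occurrences of) variables. -/
def size (φ : Fla X) : ℕ := (vars φ).length

/-- A formula is read-once when no variable occurs twice. -/
def ReadOnce (φ : Fla X) : Prop := (vars φ).Nodup

/-- Relative Hamming distance between two assignments, measured over the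
variables of `φ`. -/
noncomputable def hamming (φ : Fla X) (σ σ' : X → Bool) : ℝ :=
  ((vars φ).countP (fun x => σ x != σ' x) : ℝ) / (size φ : ℝ)

/-- `σ` is `ε`-far from making `φ` evaluate to `b`. -/
def EpsFar (φ : Fla X) (b : Bool) (σ : X → Bool) (ε : ℝ) : Prop :=
  ∀ σ', eval σ' φ = b → ε ≤ hamming φ σ σ'

/-- `σ` is `ε`-close to making `φ` evaluate to `b`. -/
def EpsClose (φ : Fla X) (b : Bool) (σ : X → Bool) (ε : ℝ) : Prop :=
  ∃ σ', eval σ' φ = b ∧ hamming φ σ σ' ≤ ε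

/-- The children of the root. -/
def children : Fla X → List (Fla X)
  | and l => l
  | or l => l
  | gate _ l => l
  | _ => []

def isAnd : Fla X → Prop
  | and _ => True
  | _ => False

def isOr : Fla X → Prop
  | or _ => True
  | _ => False

/-- The `i`-th input of the `n`-ary gate `f` is `(a,b)`-forceful. -/
def Forceful (f : List Bool → Bool) (n i : ℕ) : Prop :=
  ∃ a b : Bool, ∀ l : List Bool, l.length = n → l[i]? = some a → f l = b

/-- An `n`-ary gate is unforceable if no input is forceful. -/
def Unforceable (f : List Bool → Bool) (n : ℕ) : Prop :=
  ∀ i < n, ¬ Forceful f n i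

/-- `k`-`x`-basic formulas. -/
inductive KxBasic (k : ℕ) : Fla X → Prop where
  | leaf (x : X) : KxBasic k (.leaf x)
  | neg (x : X) : KxBasic k (.neg x)
  | and (l : List (Fla X)) : 2 ≤ l.length → (∀ φ ∈ l, KxBasic k φ) →
      (∀ φ ∈ l, ¬ isAnd φ) → KxBasic k (.and l)
  | or (l : List (Fla X)) : 2 ≤ l.length → (∀ φ ∈ l, KxBasic k φ) →
      (∀ φ ∈ l, ¬ isOr φ) → KxBasic k (.or l)
  | gate (f : List Bool → Bool) (l : List (Fla X)) : 2 ≤ l.length → l.length ≤ k →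
      Unforceable f l.length → (∀ φ ∈ l, KxBasic k φ) → KxBasic k (.gate f l)

/-- Basic formulas: only `∧`/`∨` gates, alternating, negations at leaves. -/
inductive BasicF : Fla X → Prop where
  | leaf (x : X) : BasicF (.leaf x)
  | neg (x : X) : BasicF (.neg x)
  | and (l : List (Fla X)) : 2 ≤ l.length → (∀ φ ∈ l, BasicF φ) →
      (∀ φ ∈ l, ¬ isAnd φ) → BasicF (.and l)
  | or (l : List (Fla X)) : 2 ≤ l.length → (∀ φ ∈ l, BasicF φ) →
      (∀ φ ∈ l, ¬ isOr φ) → BasicF (.or l)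

end Fla

open Fla

namespace Fla
variable {X : Type}

lemma attach_all {α} (l : List α) (p : α → Bool) :
    l.attach.all (fun x => p x.1) = l.all p := by
  rw [Bool.eq_iff_iff]; simp [List.all_eq_true]

lemma attach_any {α} (l : List α) (p : α → Bool) :
    l.attach.any (fun x => p x.1) = l.any p := by
  rw [Bool.eq_iff_iff]; simp [List.any_eq_true]

lemma attach_flatMap {α β} (l : List α) (p : α → List β) :
    l.attach.flatMap (fun x => p x.1) = l.flatMap p := by
  show (l.attach.map (fun x => p x.1)).flatten = (l.map p).flatten
  rw [List.attach_map_val]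

lemma eval_and (σ : X → Bool) (l : List (Fla X)) : eval σ (.and l) = l.all (eval σ) := by
  rw [eval]; exact attach_all l (eval σ)
lemma eval_or (σ : X → Bool) (l : List (Fla X)) : eval σ (.or l) = l.any (eval σ) := by
  rw [eval]; exact attach_any l (eval σ)
lemma eval_gate (σ : X → Bool) (f : List Bool → Bool) (l : List (Fla X)) :
    eval σ (.gate f l) = f (l.map (eval σ)) := by
  rw [eval]; exact congrArg f List.attach_map_val
lemma vars_and (l : List (Fla X)) : vars (.and l) = l.flatMap vars := by
  rw [vars]; exact attach_flatMap l vars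
lemma vars_or (l : List (Fla X)) : vars (.or l) = l.flatMap vars := by
  rw [vars]; exact attach_flatMap l vars
lemma vars_gate (f : List Bool → Bool) (l : List (Fla X)) :
    vars (.gate f l) = l.flatMap vars := by
  rw [vars]; exact attach_flatMap l vars

end Fla
open Fla

namespace Fla
variable {X : Type}

lemma all_congr' {α} {l : List α} {p q : α → Bool} (h : ∀ x ∈ l, p x = q x) :
    l.all p = l.all q := by
  induction l with
  | nil => rfl
  | cons a t ih =>
    simp only [List.all_cons]
    rw [h a (by simp), ih (fun x hx => h x (by simp [hx]))]

lemma any_congr' {α} {l : List α} {p q : α → Bool} (h : ∀ x ∈ l, p x = q x) :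
    l.any p = l.any q := by
  induction l with
  | nil => rfl
  | cons a t ih =>
    simp only [List.any_cons]
    rw [h a (by simp), ih (fun x hx => h x (by simp [hx]))]

theorem eval_congr : ∀ (φ : Fla X) (σ σ' : X → Bool),
    (∀ x ∈ vars φ, σ x = σ' x) → eval σ φ = eval σ' φ
  | .leaf x, σ, σ', h => by
      simp only [eval]; exact h x (by rw [vars]; simp)
  | .neg x, σ, σ', h => by
      simp only [eval]; rw [h x (by rw [vars]; simp)]
  | .and l, σ, σ', h => by
      rw [eval_and, eval_and]
      refine all_congr' (fun φ' hφ' => ?_)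
      exact eval_congr φ' σ σ' (fun x hx => h x (by
        rw [vars_and]; exact List.mem_flatMap.2 ⟨φ', hφ', hx⟩))
  | .or l, σ, σ', h => by
      rw [eval_or, eval_or]
      refine any_congr' (fun φ' hφ' => ?_)
      exact eval_congr φ' σ σ' (fun x hx => h x (by
        rw [vars_or]; exact List.mem_flatMap.2 ⟨φ', hφ', hx⟩))
  | .gate f l, σ, σ', h => by
      rw [eval_gate, eval_gate]
      congr 1
      refine List.map_congr_left (fun φ' hφ' => ?_)
      exact eval_congr φ' σ σ' (fun x hx => h x (by
        rw [vars_gate]; exact List.mem_flatMap.2 ⟨φ', hφ', hx⟩))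
termination_by φ => sizeOf φ
decreasing_by all_goals (have := List.sizeOf_lt_of_mem hφ'; simp; omega)

end Fla
open Fla

namespace Fla
variable {X : Type} {k : ℕ}

lemma vars_ne_nil {φ : Fla X} (h : KxBasic k φ) : vars φ ≠ [] := by
  induction h with
  | leaf x => rw [vars]; simp
  | neg x => rw [vars]; simp
  | and l hlen hch hna ih =>
    rw [vars_and]
    match l, hlen with
    | φ₀ :: t, _ =>
      have h0 := ih φ₀ (by simp)
      simp only [List.flatMap_cons, ne_eq, List.append_eq_nil_iff]
      tauto
  | or l hlen hch hna ih =>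
    rw [vars_or]
    match l, hlen with
    | φ₀ :: t, _ =>
      have h0 := ih φ₀ (by simp)
      simp only [List.flatMap_cons, ne_eq, List.append_eq_nil_iff]
      tauto
  | gate f l h2 hk hu hch ih =>
    rw [vars_gate]
    match l, h2 with
    | φ₀ :: t, _ =>
      have h0 := ih φ₀ (by simp)
      simp only [List.flatMap_cons, ne_eq, List.append_eq_nil_iff]
      tauto

lemma size_pos {φ : Fla X} (h : KxBasic k φ) : 0 < size φ :=
  List.length_pos_iff.2 (vars_ne_nil h)

end Fla
open Fla

namespace Fla
variable {X : Type} {k : ℕ}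

mutual

theorem sat : ∀ (φ : Fla X), KxBasic k φ → (vars φ).Nodup → ∀ b : Bool,
    ∃ σ : X → Bool, eval σ φ = b
  | .leaf x, _, _, b => ⟨fun _ => b, by simp [eval]⟩
  | .neg x, _, _, b => ⟨fun _ => !b, by simp [eval]⟩
  | .and l, h, hn, b => by
      have hch : ∀ φ ∈ l, KxBasic k φ := by cases h with | and _ _ h2 _ => exact h2
      have hlen : 2 ≤ l.length := by cases h with | and _ h1 _ _ => exact h1
      obtain ⟨σ, hσ⟩ := satList l hch (by rwa [vars_and] at hn)
        (List.replicate l.length b) (by simp)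
      have hall : ∀ x ∈ l, eval σ x = b := fun x hx =>
        List.eq_of_mem_replicate (hσ ▸ List.mem_map_of_mem (f := eval σ) hx)
      refine ⟨σ, ?_⟩
      rw [eval_and]
      cases b with
      | true => exact List.all_eq_true.2 hall
      | false =>
        match l, hlen, hall with
        | φ0 :: t, _, hall =>
          simp only [List.all_cons, hall φ0 (by simp), Bool.false_and]
  | .or l, h, hn, b => by
      have hch : ∀ φ ∈ l, KxBasic k φ := by cases h with | or _ _ h2 _ => exact h2
      have hlen : 2 ≤ l.length := by cases h with | or _ h1 _ _ => exact h1
      obtain ⟨σ, hσ⟩ := satList l hch (by rwa [vars_or] at hn)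
        (List.replicate l.length b) (by simp)
      have hall : ∀ x ∈ l, eval σ x = b := fun x hx =>
        List.eq_of_mem_replicate (hσ ▸ List.mem_map_of_mem (f := eval σ) hx)
      refine ⟨σ, ?_⟩
      rw [eval_or]
      cases b with
      | false =>
        rw [List.any_eq_false]; intro x hx; simp [hall x hx]
      | true =>
        match l, hlen, hall with
        | φ0 :: t, _, hall =>
          simp only [List.any_cons, hall φ0 (by simp), Bool.true_or]
  | .gate f l, h, hn, b => by
      have hch : ∀ φ ∈ l, KxBasic k φ := by cases h with | gate _ _ _ _ _ h4 => exact h4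
      have hlen : 2 ≤ l.length := by cases h with | gate _ _ h1 _ _ _ => exact h1
      have hu : Unforceable f l.length := by cases h with | gate _ _ _ _ h3 _ => exact h3
      have hv : ∃ v : List Bool, v.length = l.length ∧ f v = b := by
        by_contra hc
        push_neg at hc
        refine hu 0 (by omega) ⟨true, !b, fun lv hl _ => ?_⟩
        have := hc lv hl
        cases hfv : f lv <;> cases b <;> simp_all
      obtain ⟨v, hvl, hvf⟩ := hv
      obtain ⟨σ, hσ⟩ := satList l hch (by rwa [vars_gate] at hn) v hvl
      exact ⟨σ, by rw [eval_gate, hσ, hvf]⟩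

termination_by φ => sizeOf φ
decreasing_by all_goals (simp; try omega)

theorem satList : ∀ (l : List (Fla X)), (∀ φ ∈ l, KxBasic k φ) →
    (l.flatMap vars).Nodup → ∀ t : List Bool, t.length = l.length →
    ∃ σ : X → Bool, l.map (eval σ) = t
  | [], _, _, t, ht => ⟨fun _ => true, by simp [List.length_eq_zero_iff.1 ht]⟩
  | φ0 :: rest, hch, hn, t, ht => by
      rw [List.flatMap_cons] at hn
      obtain ⟨hn0, hnr, hd⟩ := List.nodup_append.1 hn
      match t, ht with
      | b :: ts, ht =>
        obtain ⟨σ1, h1⟩ := sat φ0 (hch _ (by simp)) hn0 b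
        obtain ⟨σ2, h2⟩ := satList rest (fun φ hφ => hch φ (by simp [hφ])) hnr ts
          (by simpa using ht)
        classical
        refine ⟨fun x => if x ∈ vars φ0 then σ1 x else σ2 x, ?_⟩
        rw [List.map_cons]
        congr 1
        · rw [← h1]; exact eval_congr _ _ _ (fun x hx => by simp [hx])
        · rw [← h2]
          refine List.map_congr_left (fun ψ hψ => ?_)
          refine eval_congr _ _ _ (fun x hx => ?_)
          have hx' : x ∈ rest.flatMap vars := List.mem_flatMap.2 ⟨ψ, hψ, hx⟩
          have hnotin : x ∉ vars φ0 := fun hmem => hd _ hmem _ hx' rfl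
          simp [hnotin]

termination_by l => sizeOf l
decreasing_by all_goals (simp; try omega)

end

end Fla
open Fla

namespace Fla

lemma nodup_of_flatMap_nodup {α β : Type*} {f : α → List β} {l : List α}
    (hf : ∀ x ∈ l, f x ≠ []) (h : (l.flatMap f).Nodup) : l.Nodup := by
  induction l with
  | nil => exact List.nodup_nil
  | cons a t ih =>
    rw [List.flatMap_cons] at h
    obtain ⟨h1, h2, hd⟩ := List.nodup_append.1 h
    refine List.nodup_cons.2 ⟨?_, ih (fun x hx => hf x (by simp [hx])) h2⟩
    intro hat
    obtain ⟨y, hy⟩ := List.exists_mem_of_ne_nil _ (hf a (by simp))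
    exact hd _ hy _ (List.mem_flatMap.2 ⟨a, hat, hy⟩) rfl

end Fla

open Fla in
/-- Observation about `∨` vertices in `k`-`x`-basic formulas:
if `σ` is `ε`-far from making an `∨`-rooted subformula of a `k`-`x`-basic
read-once formula evaluate to `1`, then every child has size at least `ε|Φ_v|`,
every child is `ε/(1-ε)`-far from evaluating to `1`, `ε ≤ 1/2`, and every child
other than the heaviest one is `2ε`-far from evaluating to `1`. -/
theorem or_vertex_far_children {X : Type} (k : ℕ) (l : List (Fla X))
    (Φv : Fla X) (hΦ : Φv = Fla.or l) (hbasic : KxBasic k Φv) (hro : Φv.ReadOnce)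
    (σ : X → Bool) (ε : ℝ) (hε : 0 < ε) (hfar : EpsFar Φv true σ ε) :
    (∀ u ∈ l, ε * (size Φv : ℝ) ≤ (size u : ℝ)) ∧
    (∀ u ∈ l, EpsFar u true σ (ε / (1 - ε))) ∧
    ε ≤ 1 / 2 ∧
    ∀ lc ∈ l, (∀ w ∈ l, size w ≤ size lc) →
      ∀ u ∈ l, u ≠ lc → EpsFar u true σ (2 * ε) := by
  classical
  subst hΦ
  have hch : ∀ φ ∈ l, KxBasic k φ := by cases hbasic with | or _ _ h2 _ => exact h2
  have hlen : 2 ≤ l.length := by cases hbasic with | or _ h1 _ _ => exact h1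
  have hnodup : (l.flatMap vars).Nodup := by rwa [ReadOnce, vars_or] at hro
  have Npos : (0 : ℝ) < (size (Fla.or l) : ℝ) := by
    exact_mod_cast size_pos hbasic
  set N : ℝ := (size (Fla.or l) : ℝ) with hN
  -- vars of each child are nodup, and size additivity facts
  have hsub : ∀ u ∈ l, (vars u).Sublist (l.flatMap vars) := by
    intro u hu
    obtain ⟨s, t, rfl⟩ := List.append_of_mem hu
    rw [List.flatMap_append, List.flatMap_cons]
    exact ((List.sublist_append_left _ _).trans (List.sublist_append_right _ _) : (vars u).Sublist _)
  have hvnodup : ∀ u ∈ l, (vars u).Nodup := fun u hu => (hsub u hu).nodup hnodup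
  -- core counting lemma
  have core : ∀ u ∈ l, ∀ σ' : X → Bool, eval σ' u = true →
      ε * N ≤ (((vars u).countP (fun x => σ x != σ' x) : ℕ) : ℝ) := by
    intro u hu σ' hev
    set σ'' : X → Bool := fun x => if x ∈ vars u then σ' x else σ x with hσ''
    have hagree : ∀ x ∈ vars u, σ'' x = σ' x := fun x hx => by simp [hσ'', hx]
    have hevu : eval σ'' u = true := by rw [← hev]; exact eval_congr u σ'' σ' hagree
    have hevΦ : eval σ'' (Fla.or l) = true := by
      rw [eval_or, List.any_eq_true]; exact ⟨u, hu, hevu⟩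
    have hham := hfar σ'' hevΦ
    obtain ⟨s, t, hst⟩ := List.append_of_mem hu
    have hvars : vars (Fla.or l) = s.flatMap vars ++ (vars u ++ t.flatMap vars) := by
      rw [vars_or, hst, List.flatMap_append, List.flatMap_cons]
    have hnd : (s.flatMap vars ++ (vars u ++ t.flatMap vars)).Nodup := by
      rw [← hvars, vars_or]; exact hnodup
    obtain ⟨hnd1, hnd2, hdisj1⟩ := List.nodup_append.1 hnd
    obtain ⟨hndu, hndt, hdisj2⟩ := List.nodup_append.1 hnd2
    have hcount : (vars (Fla.or l)).countP (fun x => σ x != σ'' x)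
        = (vars u).countP (fun x => σ x != σ' x) := by
      rw [hvars, List.countP_append, List.countP_append]
      have c1 : (s.flatMap vars).countP (fun x => σ x != σ'' x) = 0 := by
        rw [List.countP_eq_zero]
        intro a ha
        have hanotu : a ∉ vars u := fun hau =>
          hdisj1 _ ha _ (List.mem_append.2 (Or.inl hau)) rfl
        simp [hσ'', hanotu]
      have c3 : (t.flatMap vars).countP (fun x => σ x != σ'' x) = 0 := by
        rw [List.countP_eq_zero]
        intro a ha
        have hanotu : a ∉ vars u := fun hau => hdisj2 _ hau _ ha rfl
        simp [hσ'', hanotu]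
      have c2 : (vars u).countP (fun x => σ x != σ'' x)
          = (vars u).countP (fun x => σ x != σ' x) := by
        refine List.countP_congr (fun x hx => ?_)
        rw [hagree x hx]
      rw [c1, c2, c3]
      omega
    rw [hamming, hcount] at hham
    exact (le_div_iff₀ Npos).1 hham
  -- part 1
  have part1 : ∀ u ∈ l, ε * N ≤ (size u : ℝ) := by
    intro u hu
    obtain ⟨σ', hσ'⟩ := sat u (hch u hu) (hvnodup u hu) true
    refine (core u hu σ' hσ').trans ?_
    exact_mod_cast List.countP_le_length
  -- pairwise size bound
  have sizes_le : ∀ u ∈ l, ∀ w ∈ l, u ≠ w → size u + size w ≤ size (Fla.or l) := by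
    intro u hu w hw hne
    have hsz : size (Fla.or l) = (l.map size).sum := by
      rw [size, vars_or, List.length_flatMap]; rfl
    have hperm : l.Perm (u :: l.erase u) := List.perm_cons_erase hu
    have hsum : (l.map size).sum = size u + ((l.erase u).map size).sum := by
      rw [(hperm.map size).sum_eq, List.map_cons, List.sum_cons]
    have hwmem : w ∈ l.erase u := (List.mem_erase_of_ne (Ne.symm hne)).2 hw
    have : size w ≤ ((l.erase u).map size).sum :=
      List.single_le_sum (fun x _ => Nat.zero_le x) _ (List.mem_map_of_mem (f := size) hwmem)
    omega
  -- nodup of l and existence of a second child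
  have hlnodup : l.Nodup :=
    nodup_of_flatMap_nodup (fun x hx => vars_ne_nil (hch x hx)) hnodup
  have exists_other : ∀ u ∈ l, ∃ w ∈ l, w ≠ u := by
    intro u hu
    match l, hlen, hlnodup, hu with
    | a :: b :: t, _, hnd, hu =>
      by_cases hua : u = a
      · exact ⟨b, by simp, fun hba => by
          subst hua hba; exact (List.nodup_cons.1 hnd).1 (by simp)⟩
      · exact ⟨a, by simp, fun hau => hua (hau ▸ rfl)⟩
  -- part 3
  have part3 : ε ≤ 1 / 2 := by
    match l, hlen, hlnodup, hch, part1, sizes_le with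
    | a :: b :: t, _, hnd, hch, part1, sizes_le =>
      have hab : a ≠ b := fun h => (List.nodup_cons.1 hnd).1 (h ▸ by simp)
      have h1 := part1 a (by simp)
      have h2 := part1 b (by simp)
      have h3 := sizes_le a (by simp) b (by simp) hab
      have h3' : (size a : ℝ) + (size b : ℝ) ≤ N := by rw [hN]; exact_mod_cast h3
      nlinarith
  have hone : (0 : ℝ) < 1 - ε := by linarith
  -- part 2
  have part2 : ∀ u ∈ l, EpsFar u true σ (ε / (1 - ε)) := by
    intro u hu σ' hev
    have hc := core u hu σ' hev
    obtain ⟨w, hw, hwu⟩ := exists_other u hu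
    have hsw := part1 w hw
    have hsz : (size u : ℝ) + (size w : ℝ) ≤ N := by
      rw [hN]; exact_mod_cast sizes_le u hu w hw (fun h => hwu h.symm)
    have hsu : (size u : ℝ) ≤ (1 - ε) * N := by nlinarith
    have hsupos : (0 : ℝ) < (size u : ℝ) := by exact_mod_cast size_pos (hch u hu)
    rw [hamming, le_div_iff₀ hsupos, div_mul_eq_mul_div, div_le_iff₀ hone]
    set c : ℝ := (((vars u).countP (fun x => σ x != σ' x) : ℕ) : ℝ)
    nlinarith
  refine ⟨part1, part2, part3, ?_⟩
  -- part 4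
  intro lc hlc hheavy u hu hune σ' hev
  have hc := core u hu σ' hev
  have hsz : (size u : ℝ) + (size lc : ℝ) ≤ N := by
    rw [hN]; exact_mod_cast sizes_le u hu lc hlc hune
  have hle : (size u : ℝ) ≤ (size lc : ℝ) := by exact_mod_cast hheavy u hu
  have hsupos : (0 : ℝ) < (size u : ℝ) := by exact_mod_cast size_pos (hch u hu)
  rw [hamming, le_div_iff₀ hsupos]
  set c : ℝ := (((vars u).countP (fun x => σ x != σ' x) : ℕ) : ℝ)
  nlinarith
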